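/- Every edge of the toroidal embedding of K7 is non-removable: removing any edge from K7 yields a graph which, with the induced embedding, merges two triangular faces into a quadrilateral whose boundary meets some other face improperly or fails the polyhedral map conditions; hence K7 on the torus is diminimal with respect to edge removal. -/

import Mathlib

/-- The setoid on a type given by "same cycle of the permutation `p`". -/
def sameCycleSetoid {D : Type*} (p : Equiv.Perm D) : Setoid D :=
  ⟨p.SameCycle, ⟨fun x => Equiv.Perm.SameCycle.refl p x,
    fun h => h.symm, fun h h' => h.trans h'⟩⟩

/-- The number of cycles (orbits) of a permutation. -/
noncomputable def numCycles {D : Type*} (p : Equiv.Perm D) : ℕ :=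
  Nat.card (Quotient (sameCycleSetoid p))

/-- A combinatorial map: a finite set of darts, a vertex-rotation permutation `σ`
(whose cycles are the vertices with their cyclic order of incident darts), and a
fixed-point-free involution `α` pairing the two darts of each edge.
Faces are the cycles of `σ * α`. -/
structure TorusMap where
  D : Type
  [fin : Fintype D]
  σ : Equiv.Perm D
  α : Equiv.Perm D
  α_invol : ∀ d, α (α d) = d
  α_nofix : ∀ d, α d ≠ d

namespace TorusMap

variable (M : TorusMap)

instance : Fintype M.D := M.fin

/-- The face-tracing permutation. -/
def φ : Equiv.Perm M.D := M.σ * M.α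

noncomputable def V : ℕ := numCycles M.σ
noncomputable def E : ℕ := numCycles M.α
noncomputable def F : ℕ := numCycles M.φ

/-- The embedding lies on the torus: Euler characteristic `V - E + F = 0`. -/
def OnTorus : Prop := (M.V : ℤ) - M.E + M.F = 0

/-- Every vertex has degree at least 3. -/
def DegGe3 : Prop := ∀ d, M.σ d ≠ d ∧ M.σ (M.σ d) ≠ d

/-- Every face has at least 3 sides. -/
def FaceGe3 : Prop := ∀ d, M.φ d ≠ d ∧ M.φ (M.φ d) ≠ d

/-- No loops: the two darts of an edge lie at distinct vertices. -/
def NoLoop : Prop := ∀ d, ¬ M.σ.SameCycle d (M.α d)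

/-- No multiple edges: two edges joining the same pair of vertices coincide. -/
def NoMulti : Prop := ∀ d d', M.σ.SameCycle d d' → M.σ.SameCycle (M.α d) (M.α d') →
  (d' = d ∨ d' = M.α d)

/-- The underlying graph is simple. -/
def Simple : Prop := M.NoLoop ∧ M.NoMulti

/-- All faces are triangles. -/
def Triangular : Prop := ∀ d, M.φ (M.φ (M.φ d)) = d ∧ M.φ d ≠ d

/-- The boundary of each face is a simple closed curve (no repeated vertices). -/
def FaceSimple : Prop := ∀ x y, M.φ.SameCycle x y → M.σ.SameCycle x y → x = y

/-- No face traverses the same edge twice (the two sides of each edge lie on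
distinct faces). -/
def FaceNoRepeatEdge : Prop := ∀ x, ¬ M.φ.SameCycle x (M.α x)

/-- The set of darts of the face containing dart `d`. -/
def faceSet (d : M.D) : Set M.D := {x | M.φ.SameCycle d x}

/-- The vertex (a `σ`-cycle) at which a dart is based. -/
def vtxOf (d : M.D) : Quotient (sameCycleSetoid M.σ) := Quotient.mk _ d

/-- The edge (an `α`-orbit) carrying a dart. -/
def edgeOf (d : M.D) : Quotient (sameCycleSetoid M.α) := Quotient.mk _ d

/-- Vertices common to the faces of darts `d` and `d'`. -/
def sharedVerts (d d' : M.D) : Set (Quotient (sameCycleSetoid M.σ)) :=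
  (M.vtxOf '' M.faceSet d) ∩ (M.vtxOf '' M.faceSet d')

/-- Edges common to the faces of darts `d` and `d'`. -/
def sharedEdges (d d' : M.D) : Set (Quotient (sameCycleSetoid M.α)) :=
  (M.edgeOf '' M.faceSet d) ∩ (M.edgeOf '' M.faceSet d')

/-- Two faces meet properly: their intersection is empty, a single vertex, or a
single edge together with its two endpoints. -/
def MeetProperly (d d' : M.D) : Prop :=
  (M.sharedEdges d d' = ∅ ∧ (M.sharedVerts d d').Subsingleton) ∨
  (∃ e, e ∈ M.faceSet d ∧ M.sharedEdges d d' = {M.edgeOf e} ∧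
    M.sharedVerts d d' = {M.vtxOf e, M.vtxOf (M.α e)})

/-- A polyhedral map: simple graph, minimum degree 3, each face bounded by a
simple closed curve, and any two distinct faces meet properly. -/
def Polyhedral : Prop :=
  M.Simple ∧ M.DegGe3 ∧ M.FaceSimple ∧ M.FaceNoRepeatEdge ∧
    ∀ d d', ¬ M.φ.SameCycle d d' → M.MeetProperly d d'

/-- A toroidal polyhedral map (TPM). -/
def IsTPM : Prop := Nonempty M.D ∧ M.OnTorus ∧ M.Polyhedral

/-- The dual map: vertices and faces are exchanged. -/
def dual : TorusMap := ⟨M.D, M.φ, M.α, M.α_invol, M.α_nofix⟩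

end TorusMap

section Skip
variable {D : Type*} [Fintype D] (p : Equiv.Perm D) (S : Set D)

lemma skip_ex (x : {y : D // y ∉ S}) : ∃ n, 0 < n ∧ p^[n] x.1 ∉ S := by
  refine ⟨orderOf p, orderOf_pos p, ?_⟩
  have h : p ^ orderOf p = 1 := pow_orderOf_eq_one p
  have : p^[orderOf p] x.1 = (p ^ orderOf p) x.1 := by
    rw [← Equiv.Perm.iterate_eq_pow]
  rw [this, h]
  exact x.2

open Classical in
/-- First-return map of the permutation `p` on the complement of `S`. -/
noncomputable def skipFun (x : {y : D // y ∉ S}) : {y : D // y ∉ S} :=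
  ⟨p^[Nat.find (skip_ex p S x)] x.1, (Nat.find_spec (skip_ex p S x)).2⟩

open Classical in
lemma skipFun_inj : Function.Injective (skipFun p S) := by
  classical
  have key : ∀ x y : {y : D // y ∉ S},
      Nat.find (skip_ex p S x) ≤ Nat.find (skip_ex p S y) →
      skipFun p S x = skipFun p S y → x = y := by
    intro x y hmn h
    set m := Nat.find (skip_ex p S x) with hm
    set n := Nat.find (skip_ex p S y) with hn
    have hiter : p^[m] x.1 = p^[n] y.1 := congrArg Subtype.val h
    have hx : x.1 = p^[n - m] y.1 := by
      have : p^[m] x.1 = p^[m] (p^[n - m] y.1) := by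
        rw [← Function.iterate_add_apply, Nat.add_sub_cancel' hmn, hiter]
      exact (p.injective.iterate m) this
    rcases Nat.eq_zero_or_pos (n - m) with h0 | hpos
    · ext
      simp [hx, h0]
    · exfalso
      have hlt : n - m < n := by
        have hm0 : 0 < m := (Nat.find_spec (skip_ex p S x)).1
        omega
      have := Nat.find_min (skip_ex p S y) hlt
      exact this ⟨hpos, by rw [← hx]; exact x.2⟩
  intro x y h
  rcases le_total (Nat.find (skip_ex p S x)) (Nat.find (skip_ex p S y)) with hle | hle
  · exact key x y hle h
  · exact (key y x hle h.symm).symm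

/-- The permutation induced by `p` on the complement of `S` by skipping over `S`. -/
noncomputable def skipPerm : Equiv.Perm {y : D // y ∉ S} :=
  Equiv.ofBijective _ ((Finite.injective_iff_bijective).mp (skipFun_inj p S))

end Skip

namespace TorusMap

lemma alpha_mem (M : TorusMap) (d x : M.D) :
    x ∉ ({d, M.α d} : Set M.D) ↔ M.α x ∉ ({d, M.α d} : Set M.D) := by
  simp only [Set.mem_insert_iff, Set.mem_singleton_iff]
  constructor
  · rintro h h'
    rcases h' with h' | h'
    · exact h (Or.inr (by rw [← h', M.α_invol]))
    · exact h (Or.inl (M.α.injective h'))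
  · rintro h h'
    rcases h' with h' | h'
    · exact h (Or.inr (by rw [h']))
    · exact h (Or.inl (by rw [h', M.α_invol]))

/-- Deletion of the edge carried by the dart `d`: both darts of the edge are
removed, and the rotations at its endpoints skip over them. -/
noncomputable def deleteEdge (M : TorusMap) (d : M.D) : TorusMap where
  D := {x : M.D // x ∉ ({d, M.α d} : Set M.D)}
  fin := Fintype.ofFinite _
  σ := skipPerm M.σ _
  α := M.α.subtypePerm (fun x => (M.alpha_mem d x).symm)
  α_invol := fun x => Subtype.ext (by
    simpa [Equiv.Perm.subtypePerm_apply] using M.α_invol x.1)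
  α_nofix := fun x h => M.α_nofix x.1 (congrArg Subtype.val h)

/-- Contraction of the edge carried by the dart `d` (dual to deletion). -/
noncomputable def contractEdge (M : TorusMap) (d : M.D) : TorusMap :=
  (M.dual.deleteEdge d).dual

/-- `x` is a dart at a vertex of degree exactly 2. -/
def Deg2 (M : TorusMap) (x : M.D) : Prop := M.σ x ≠ x ∧ M.σ (M.σ x) = x

/-- `x` is a dart of a 2-sided face. -/
def Face2 (M : TorusMap) (x : M.D) : Prop := M.φ x ≠ x ∧ M.φ (M.φ x) = x

/-- `CoalesceOf N N'` holds when `N'` is obtained from `N` by repeatedly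
coalescing the two edges at a degree-2 vertex (i.e. contracting one of them)
until no degree-2 vertex remains. -/
inductive CoalesceOf : TorusMap → TorusMap → Prop
  | refl (N : TorusMap) (h : ∀ x : N.D, ¬ N.Deg2 x) : CoalesceOf N N
  | step (N N' : TorusMap) (x : N.D) (hx : N.Deg2 x)
      (h : CoalesceOf (N.contractEdge x) N') : CoalesceOf N N'

/-- `SimplifyOf N N'` holds when `N'` is obtained from `N` by repeatedly
replacing the two edges of a 2-sided face by a single edge (i.e. deleting one
of them) until no 2-sided face remains. -/
inductive SimplifyOf : TorusMap → TorusMap → Prop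
  | refl (N : TorusMap) (h : ∀ x : N.D, ¬ N.Face2 x) : SimplifyOf N N
  | step (N N' : TorusMap) (x : N.D) (hx : N.Face2 x)
      (h : SimplifyOf (N.deleteEdge x) N') : SimplifyOf N N'

/-- An edge is removable if removing it (and coalescing the edges at any
resulting degree-2 vertex) again yields a toroidal polyhedral map. -/
def Removable (M : TorusMap) (d : M.D) : Prop :=
  ∃ N, CoalesceOf (M.deleteEdge d) N ∧ N.IsTPM

/-- An edge is shrinkable if contracting it (and replacing any resulting
2-sided face by a single edge) again yields a toroidal polyhedral map. -/
def Shrinkable (M : TorusMap) (d : M.D) : Prop :=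
  ∃ N, SimplifyOf (M.contractEdge d) N ∧ N.IsTPM

/-- A toroidal polyhedral map is diminimal if it has no removable and no
shrinkable edges. -/
def Diminimal (M : TorusMap) : Prop :=
  M.IsTPM ∧ ∀ d : M.D, ¬ M.Removable d ∧ ¬ M.Shrinkable d

end TorusMap

/-- Darts of the complete graph `K7`: ordered pairs of distinct vertices. -/
abbrev K7Dart : Type := {p : Fin 7 × Fin 7 // p.1 ≠ p.2}

/-- The rotation system `a: bcdefg, b: agdfec, c: abegfd, d: acfbge, e: adgcbf,
f: aebdcg, g: afcedb` with `a = 0, …, g = 6`. -/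
def rotList : Fin 7 → List (Fin 7)
  | 0 => [1, 2, 3, 4, 5, 6]
  | 1 => [0, 6, 3, 5, 4, 2]
  | 2 => [0, 1, 4, 6, 5, 3]
  | 3 => [0, 2, 5, 1, 6, 4]
  | 4 => [0, 3, 6, 2, 1, 5]
  | 5 => [0, 4, 1, 3, 2, 6]
  | 6 => [0, 5, 2, 4, 3, 1]

/-- The element following `v` in the cyclic order given by the list `l`. -/
def cycNext (l : List (Fin 7)) (v : Fin 7) : Fin 7 :=
  l.getD ((l.idxOf v + 1) % l.length) v

/-- The vertex-rotation function: `(u, v) ↦ (u, w)` where `w` follows `v` in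
the cyclic order at `u`. -/
def k7rotFun (d : K7Dart) : K7Dart :=
  let t := cycNext (rotList d.1.1) d.1.2
  if h : d.1.1 = t then d else ⟨(d.1.1, t), h⟩

noncomputable def k7rot : Equiv.Perm K7Dart := Equiv.ofBijective k7rotFun (by decide)

/-- The dart-reversal involution `(u, v) ↦ (v, u)`. -/
def k7rev : Equiv.Perm K7Dart where
  toFun d := ⟨(d.1.2, d.1.1), d.2.symm⟩
  invFun d := ⟨(d.1.2, d.1.1), d.2.symm⟩
  left_inv _ := rfl
  right_inv _ := rfl

/-- The diminimal embedding of `K7` on the torus as a combinatorial map. -/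
noncomputable def K : TorusMap :=
  { D := K7Dart, σ := k7rot, α := k7rev, α_invol := fun _ => rfl,
    α_nofix := by decide }


/-! ### Auxiliary machinery -/

section Aux

instance instDecEqKD : DecidableEq K.D := show DecidableEq K7Dart from inferInstance
instance instFinKD : Fintype K.D := show Fintype K7Dart from inferInstance

noncomputable instance instDecMemS (d : K.D) : DecidablePred (· ∈ ({d, K.α d} : Set K.D)) :=
  fun x => show Decidable (x = d ∨ x = K.α d) from inferInstance

noncomputable instance instDecEqDel (d : K.D) : DecidableEq (K.deleteEdge d).D :=
  show DecidableEq {x : K.D // x ∉ ({d, K.α d} : Set K.D)} from inferInstance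

noncomputable instance instFinDel (d : K.D) : Fintype (K.deleteEdge d).D :=
  show Fintype {x : K.D // x ∉ ({d, K.α d} : Set K.D)} from inferInstance

lemma hSfact : ∀ d z : K.D, z ∈ ({d, K.α d} : Set K.D) →
    K.σ z ∉ ({d, K.α d} : Set K.D) := by decide

/-- Computable version of the rotation of the deleted map. -/
noncomputable def gd (d : K.D) (x : (K.deleteEdge d).D) : (K.deleteEdge d).D :=
  if h : K.σ x.1 ∈ ({d, K.α d} : Set K.D) then ⟨K.σ (K.σ x.1), hSfact d _ h⟩
  else ⟨K.σ x.1, h⟩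

/-- Computable version of the involution of the deleted map. -/
noncomputable def rd (d : K.D) (x : (K.deleteEdge d).D) : (K.deleteEdge d).D :=
  ⟨K.α x.1, (K.alpha_mem d x.1).mp x.2⟩

/-- Computable version of the face permutation of the deleted map. -/
noncomputable def fd (d : K.D) (x : (K.deleteEdge d).D) : (K.deleteEdge d).D :=
  gd d (rd d x)

lemma skipFun_eval {D : Type*} [Fintype D] (p : Equiv.Perm D) (S : Set D)
    (x : {y : D // y ∉ S}) (n : ℕ) (hn : 0 < n) (h : p^[n] x.1 ∉ S)
    (hmin : ∀ m, 0 < m → m < n → p^[m] x.1 ∈ S) :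
    (skipFun p S x).1 = p^[n] x.1 := by
  classical
  have h1 : Nat.find (skip_ex p S x) ≤ n := Nat.find_min' _ ⟨hn, h⟩
  have h2 : n ≤ Nat.find (skip_ex p S x) := by
    by_contra hlt
    push_neg at hlt
    exact (Nat.find_spec (skip_ex p S x)).2
      (hmin _ (Nat.find_spec (skip_ex p S x)).1 hlt)
  show p^[Nat.find (skip_ex p S x)] x.1 = p^[n] x.1
  rw [le_antisymm h1 h2]

lemma sigma_eq (d : K.D) (x : (K.deleteEdge d).D) :
    (K.deleteEdge d).σ x = gd d x := by
  have hrfl : (K.deleteEdge d).σ x = skipFun K.σ ({d, K.α d} : Set K.D) x := rfl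
  rw [hrfl]
  unfold gd
  by_cases h : K.σ x.1 ∈ ({d, K.α d} : Set K.D)
  · refine Eq.trans ?_ (dif_pos h).symm
    apply Subtype.ext
    have := skipFun_eval K.σ ({d, K.α d} : Set K.D) x 2 (by norm_num)
      (by simpa using hSfact d _ h)
      (by intro m h1 h2; interval_cases m; simpa using h)
    simpa using this
  · refine Eq.trans ?_ (dif_neg h).symm
    apply Subtype.ext
    have := skipFun_eval K.σ ({d, K.α d} : Set K.D) x 1 one_pos (by simpa using h)
      (by intro m h1 h2; omega)
    simpa using this

lemma alpha_eq (d : K.D) (x : (K.deleteEdge d).D) :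
    (K.deleteEdge d).α x = rd d x := rfl

lemma phi_eq (d : K.D) (x : (K.deleteEdge d).D) :
    (K.deleteEdge d).φ x = fd d x := by
  have h1 : (K.deleteEdge d).φ x = (K.deleteEdge d).σ ((K.deleteEdge d).α x) := rfl
  rw [h1, alpha_eq, sigma_eq]
  rfl

lemma sameCycle_of_iter {A : Type} (p : Equiv.Perm A) (f : A → A)
    (hpf : ∀ z, p z = f z) (a b : A) (k : ℕ) (h : f^[k] a = b) :
    p.SameCycle a b := by
  refine ⟨(k : ℤ), ?_⟩
  rw [zpow_natCast, ← Equiv.Perm.iterate_eq_pow, funext hpf]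
  exact h

lemma not_sameCycle_of_iter {A : Type} [DecidableEq A] [Fintype A]
    (p : Equiv.Perm A) (f : A → A) (hpf : ∀ z, p z = f z) (a b : A)
    (hcard : Fintype.card A ≤ 40) (h : ∀ k, k < 42 → f^[k] a ≠ b) :
    ¬ p.SameCycle a b := by
  intro hs
  obtain ⟨i, hi0, hile, hib⟩ := Equiv.Perm.SameCycle.exists_pow_eq p hs
  have hsupp : (p.cycleOf a).support.card ≤ Fintype.card A := by
    simpa using Finset.card_le_card (Finset.subset_univ (p.cycleOf a).support)
  apply h i (by omega)
  rw [← funext hpf]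
  rw [Equiv.Perm.iterate_eq_pow]
  exact hib

lemma iter_mod {A : Type} (f : A → A) (y : A) (m : ℕ) (hm : 0 < m)
    (hp : f^[m] y = y) : ∀ i, ∃ j, j < m ∧ f^[i] y = f^[j] y := by
  intro i
  induction i using Nat.strong_induction_on with
  | _ i ih =>
    by_cases h : i < m
    · exact ⟨i, h, rfl⟩
    · push_neg at h
      have heq : f^[i] y = f^[i - m] y := by
        conv_lhs => rw [show i = (i - m) + m by omega]
        rw [Function.iterate_add_apply, hp]
      obtain ⟨j, hj, hje⟩ := ih (i - m) (by omega)
      exact ⟨j, hj, heq.trans hje⟩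

lemma invol_pow {A : Type} (q : Equiv.Perm A) (hq : ∀ z, q (q z) = z) :
    ∀ (i : ℕ) (a : A), (q ^ i) a = a ∨ (q ^ i) a = q a := by
  intro i
  induction i with
  | zero => intro a; left; rfl
  | succ n ih =>
    intro a
    rw [pow_succ]
    simp only [Equiv.Perm.mul_apply]
    rcases ih (q a) with h | h
    · right; exact h
    · left; rw [h, hq]

lemma invol_sameCycle {A : Type} [Finite A] (q : Equiv.Perm A)
    (hq : ∀ z, q (q z) = z) (a b : A) (h : q.SameCycle a b) :
    b = a ∨ b = q a := by
  obtain ⟨i, -, -, hib⟩ := h.exists_pow_eq''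
  rcases invol_pow q hq i a with h' | h'
  · left; rw [← hib, h']
  · right; rw [← hib, h']

/-- Two faces sharing two distinct vertices but no edge do not meet properly. -/
lemma not_meet (M : TorusMap) (x y a1 b1 a2 b2 : M.D)
    (ha1 : M.φ.SameCycle x a1) (ha2 : M.φ.SameCycle x a2)
    (hb1 : M.φ.SameCycle y b1) (hb2 : M.φ.SameCycle y b2)
    (hv1 : M.σ.SameCycle a1 b1) (hv2 : M.σ.SameCycle a2 b2)
    (h12 : ¬ M.σ.SameCycle a1 a2)
    (hE : ∀ e e', M.φ.SameCycle x e → M.φ.SameCycle y e' →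
      e' ≠ e ∧ e' ≠ M.α e) :
    ¬ M.MeetProperly x y := by
  have hm1 : M.vtxOf a1 ∈ M.sharedVerts x y :=
    ⟨⟨a1, ha1, rfl⟩, ⟨b1, hb1, (Quotient.sound hv1).symm⟩⟩
  have hm2 : M.vtxOf a2 ∈ M.sharedVerts x y :=
    ⟨⟨a2, ha2, rfl⟩, ⟨b2, hb2, (Quotient.sound hv2).symm⟩⟩
  rintro (⟨-, hsub⟩ | ⟨e, -, hEdge, -⟩)
  · exact h12 (Quotient.exact (hsub hm1 hm2))
  · have hmem : M.edgeOf e ∈ M.sharedEdges x y := by rw [hEdge]; rfl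
    obtain ⟨⟨e1, he1, hq1⟩, ⟨e2, he2, hq2⟩⟩ := hmem
    have hsc : M.α.SameCycle e1 e2 := Quotient.exact (hq1.trans hq2.symm)
    rcases invol_sameCycle M.α M.α_invol e1 e2 hsc with h | h
    · exact (hE e1 e2 he1 he2).1 h
    · exact (hE e1 e2 he1 he2).2 h

/-- Numeric code of a dart. -/
def codeD (x : K.D) : ℕ := x.1.1.val * 7 + x.1.2.val

/-- Numeric code of a dart of the deleted map. -/
def codeS {d : K.D} (x : (K.deleteEdge d).D) : ℕ := codeD x.1

/-- Witness table: for each removed dart (by code), the codes of a dart of the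
quadrilateral face and of a triangle sharing two vertices but no edge with it,
together with iteration indices locating the two shared vertices. -/
def W : ℕ → ℕ × ℕ × ℕ × ℕ × ℕ × ℕ
  | 1 => (2, 19, 1, 3, 0, 2)
  | 2 => (3, 10, 3, 1, 0, 1)
  | 3 => (4, 9, 3, 1, 1, 2)
  | 4 => (5, 12, 3, 1, 2, 1)
  | 5 => (6, 20, 3, 1, 2, 1)
  | 6 => (1, 11, 1, 3, 0, 2)
  | 7 => (2, 19, 1, 3, 0, 2)
  | 9 => (2, 4, 0, 2, 0, 1)
  | 10 => (12, 6, 1, 3, 2, 1)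
  | 11 => (9, 17, 1, 3, 0, 2)
  | 12 => (11, 4, 3, 1, 2, 1)
  | 13 => (1, 3, 0, 2, 0, 1)
  | 14 => (3, 10, 3, 1, 0, 1)
  | 15 => (2, 4, 0, 2, 0, 1)
  | 17 => (3, 5, 0, 2, 0, 1)
  | 18 => (9, 1, 0, 2, 1, 2)
  | 19 => (17, 10, 1, 3, 1, 2)
  | 20 => (19, 5, 3, 1, 2, 1)
  | 21 => (4, 9, 3, 1, 1, 2)
  | 22 => (12, 6, 1, 3, 2, 1)
  | 23 => (3, 5, 0, 2, 0, 1)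
  | 25 => (4, 1, 0, 2, 0, 2)
  | 26 => (12, 2, 0, 2, 2, 1)
  | 27 => (10, 9, 0, 2, 0, 2)
  | 28 => (5, 12, 3, 1, 2, 1)
  | 29 => (9, 17, 1, 3, 0, 2)
  | 30 => (9, 1, 0, 2, 1, 2)
  | 31 => (4, 1, 0, 2, 0, 2)
  | 33 => (5, 1, 0, 2, 0, 1)
  | 34 => (20, 3, 0, 2, 2, 1)
  | 35 => (6, 20, 3, 1, 2, 1)
  | 36 => (11, 4, 3, 1, 2, 1)
  | 37 => (17, 10, 1, 3, 1, 2)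
  | 38 => (12, 2, 0, 2, 2, 1)
  | 39 => (5, 1, 0, 2, 0, 1)
  | 41 => (6, 2, 0, 2, 0, 1)
  | 42 => (1, 11, 1, 3, 0, 2)
  | 43 => (1, 3, 0, 2, 0, 1)
  | 44 => (19, 5, 3, 1, 2, 1)
  | 45 => (10, 9, 0, 2, 0, 2)
  | 46 => (20, 3, 0, 2, 2, 1)
  | 47 => (6, 2, 0, 2, 0, 1)
  | _ => (0, 0, 0, 0, 0, 0)

/-- The decidable core facts about the map obtained by deleting a given edge. -/
def Check (d : K.D) : Prop :=
  ∃ xs ys : (K.deleteEdge d).D,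
    codeS xs = (W (codeD d)).1 ∧ codeS ys = (W (codeD d)).2.1 ∧
    (fd d)^[4] xs = xs ∧ (fd d)^[3] ys = ys ∧
    (∀ i, i < 4 → ∀ j, j < 3 →
      (fd d)^[i] xs ≠ (fd d)^[j] ys ∧ rd d ((fd d)^[i] xs) ≠ (fd d)^[j] ys) ∧
    (∃ k, k < 42 ∧
      (gd d)^[k] ((fd d)^[(W (codeD d)).2.2.1] xs) = (fd d)^[(W (codeD d)).2.2.2.2.1] ys) ∧
    (∃ k, k < 42 ∧
      (gd d)^[k] ((fd d)^[(W (codeD d)).2.2.2.1] xs) = (fd d)^[(W (codeD d)).2.2.2.2.2] ys) ∧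
    (∀ k, k < 42 →
      (gd d)^[k] ((fd d)^[(W (codeD d)).2.2.1] xs) ≠ (fd d)^[(W (codeD d)).2.2.2.1] xs)

noncomputable instance instDecCheck : DecidablePred Check :=
  fun d => by unfold Check; infer_instance

set_option maxRecDepth 10000 in
set_option maxHeartbeats 4000000 in
theorem bigFact : ∀ d : K.D,
    (∀ z, gd d (gd d z) ≠ z) ∧ Fintype.card (K.deleteEdge d).D = 40 ∧ Check d := by
  decide

end Aux

/-- **No edge of toroidal K7 is removable**; hence `K7` on the torus is
diminimal with respect to edge removal. -/
theorem K7_no_removable_edge : ∀ d : K.D, ¬ K.Removable d := by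
  intro d hrem
  obtain ⟨N, hco, hTPM⟩ := hrem
  obtain ⟨hdeg2, hcard, hch⟩ := bigFact d
  have hg : ∀ x, (K.deleteEdge d).σ x = gd d x := sigma_eq d
  have hφ : ∀ x, (K.deleteEdge d).φ x = fd d x := phi_eq d
  have hnodeg : ∀ x : (K.deleteEdge d).D, ¬ (K.deleteEdge d).Deg2 x := by
    intro x hx
    apply hdeg2 x
    have : gd d (gd d x) = (K.deleteEdge d).σ ((K.deleteEdge d).σ x) := by
      rw [hg, hg]
    rw [this, hx.2]
  have hbad : ¬ (K.deleteEdge d).IsTPM := by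
    rintro ⟨-, -, -, -, -, -, hmeet⟩
    obtain ⟨xs, ys, -, -, hx4, hy3, hpair, ⟨k1, -, hk1⟩, ⟨k2, -, hk2⟩, hne12⟩ := hch
    set n1 := (W (codeD d)).2.2.1
    set n2 := (W (codeD d)).2.2.2.1
    set m1 := (W (codeD d)).2.2.2.2.1
    set m2 := (W (codeD d)).2.2.2.2.2
    have hxmem : ∀ e, (K.deleteEdge d).φ.SameCycle xs e → ∃ j, j < 4 ∧ e = (fd d)^[j] xs := by
      intro e he
      obtain ⟨i, -, hib⟩ := he.exists_pow_eq'
      obtain ⟨j, hj, hje⟩ := iter_mod (fd d) xs 4 (by norm_num) hx4 i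
      refine ⟨j, hj, ?_⟩
      rw [← hje, ← hib, ← Equiv.Perm.iterate_eq_pow, funext hφ]
    have hymem : ∀ e, (K.deleteEdge d).φ.SameCycle ys e → ∃ j, j < 3 ∧ e = (fd d)^[j] ys := by
      intro e he
      obtain ⟨i, -, hib⟩ := he.exists_pow_eq'
      obtain ⟨j, hj, hje⟩ := iter_mod (fd d) ys 3 (by norm_num) hy3 i
      refine ⟨j, hj, ?_⟩
      rw [← hje, ← hib, ← Equiv.Perm.iterate_eq_pow, funext hφ]
    have hface : ¬ (K.deleteEdge d).φ.SameCycle xs ys := by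
      intro hs
      obtain ⟨j, hj, hje⟩ := hxmem ys hs
      exact (hpair j hj 0 (by norm_num)).1 hje.symm
    refine not_meet (K.deleteEdge d) xs ys
      ((fd d)^[n1] xs) ((fd d)^[m1] ys) ((fd d)^[n2] xs) ((fd d)^[m2] ys)
      (sameCycle_of_iter _ _ hφ _ _ n1 rfl)
      (sameCycle_of_iter _ _ hφ _ _ n2 rfl)
      (sameCycle_of_iter _ _ hφ _ _ m1 rfl)
      (sameCycle_of_iter _ _ hφ _ _ m2 rfl)
      (sameCycle_of_iter _ _ hg _ _ k1 hk1)
      (sameCycle_of_iter _ _ hg _ _ k2 hk2)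
      (not_sameCycle_of_iter _ _ hg _ _ (by omega) hne12)
      ?_ (hmeet xs ys hface)
    intro e e' he he'
    obtain ⟨i, hi, hie⟩ := hxmem e he
    obtain ⟨j, hj, hje⟩ := hymem e' he'
    constructor
    · intro h
      exact (hpair i hi j hj).1 (by rw [← hie, ← hje, h])
    · intro h
      apply (hpair i hi j hj).2
      rw [← hie, ← alpha_eq, ← h]
      exact hje
  cases hco with
  | refl _ _ => exact hbad hTPM
  | step _ _ z hz _ => exact hnodeg z hz
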